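/- Suppose {1, b, c} is a D(−1) triple with 1 < b < c, b = 1 + r², c = 1 + s², bc = 1 + t² (r, s, t positive integers). Then gcd(t, s) = gcd(t, r) = gcd(r, s). -/

import Mathlib

theorem stmt_5 (b c r s t : ℤ) (hr : 0 < r) (hs : 0 < s) (ht : 0 < t)
    (hb1 : 1 < b) (hbc : b < c)
    (hb : b = 1 + r ^ 2) (hc : c = 1 + s ^ 2) (hbct : b * c = 1 + t ^ 2) :
    Int.gcd t s = Int.gcd t r ∧ Int.gcd t r = Int.gcd r s := by
  subst hb hc
  have key : t ^ 2 = r ^ 2 + s ^ 2 * (1 + r ^ 2) := by nlinarith [hbct]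
  have sqdvd : ∀ a x : ℤ, a ^ 2 ∣ x ^ 2 → a ∣ x := fun a x h =>
    (Int.pow_dvd_pow_iff two_ne_zero).mp h
  -- gcd t s ∣ r
  have h1 : (Int.gcd t s : ℤ) ∣ r := by
    apply sqdvd
    have e : r ^ 2 = t ^ 2 - s ^ 2 * (1 + r ^ 2) := by linarith
    rw [e]
    exact dvd_sub (pow_dvd_pow_of_dvd (Int.gcd_dvd_left _ _) 2)
      ((pow_dvd_pow_of_dvd (Int.gcd_dvd_right _ _) 2).mul_right _)
  -- gcd t r ∣ s
  have h2 : (Int.gcd t r : ℤ) ∣ s := by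
    apply sqdvd
    have e : s ^ 2 = t ^ 2 - r ^ 2 * (1 + s ^ 2) := by nlinarith [key]
    rw [e]
    exact dvd_sub (pow_dvd_pow_of_dvd (Int.gcd_dvd_left _ _) 2)
      ((pow_dvd_pow_of_dvd (Int.gcd_dvd_right _ _) 2).mul_right _)
  -- gcd r s ∣ t
  have h3 : (Int.gcd r s : ℤ) ∣ t := by
    apply sqdvd
    rw [key]
    exact dvd_add (pow_dvd_pow_of_dvd (Int.gcd_dvd_left _ _) 2)
      ((pow_dvd_pow_of_dvd (Int.gcd_dvd_right _ _) 2).mul_right _)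
  have d1 : Int.gcd t s ∣ Int.gcd r s :=
    Int.natCast_dvd_natCast.mp (Int.dvd_coe_gcd h1 (Int.gcd_dvd_right _ _))
  have d2 : Int.gcd t r ∣ Int.gcd r s :=
    Int.natCast_dvd_natCast.mp (Int.dvd_coe_gcd (Int.gcd_dvd_right _ _) h2)
  have d3 : Int.gcd r s ∣ Int.gcd t s :=
    Int.natCast_dvd_natCast.mp (Int.dvd_coe_gcd h3 (Int.gcd_dvd_right _ _))
  have d4 : Int.gcd r s ∣ Int.gcd t r :=
    Int.natCast_dvd_natCast.mp (Int.dvd_coe_gcd h3 (Int.gcd_dvd_left _ _))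
  have e1 := Nat.dvd_antisymm d1 d3
  have e2 := Nat.dvd_antisymm d2 d4
  exact ⟨e1.trans e2.symm, e2⟩
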